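/- arXiv:1309.3697 — 2 statements merged into one kernel-verified Lean document; each statement's English description precedes it below -/
import Mathlib

section
/- Let t ≥ 2 be a natural number and C₁, C₂ ≥ 0. Let T_j and T_⋆ be random variables with 0 ≤ T_j and 0 ≤ T_⋆ ≤ t almost surely, and suppose E[T_j] ≤ C₁·log t and E[t − T_⋆] ≤ C₂·log t. Then P( T_j ≥ T_⋆ ) ≤ 2(C₁ + C₂)·log t / t. -/
open MeasureTheory

/-- If `0 ≤ T_j`, `0 ≤ T_⋆ ≤ t` a.s., `E[T_j] ≤ C₁ log t` and
`E[t − T_⋆] ≤ C₂ log t`, then `P(T_j ≥ T_⋆) ≤ 2(C₁ + C₂) log t / t`. -/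
theorem stmt_10
    {Ω : Type*} [MeasurableSpace Ω] (P : Measure Ω) [IsProbabilityMeasure P]
    (t : ℕ) (ht : 2 ≤ t) (C₁ C₂ : ℝ) (hC₁ : 0 ≤ C₁) (hC₂ : 0 ≤ C₂)
    (Tj Ts : Ω → ℝ)
    (hTjmeas : Measurable Tj) (hTsmeas : Measurable Ts)
    (hTjint : Integrable Tj P) (hTsint : Integrable Ts P)
    (hTjnn : ∀ᵐ ω ∂P, 0 ≤ Tj ω)
    (hTsnn : ∀ᵐ ω ∂P, 0 ≤ Ts ω) (hTsle : ∀ᵐ ω ∂P, Ts ω ≤ t)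
    (hETj : ∫ ω, Tj ω ∂P ≤ C₁ * Real.log t)
    (hETs : ∫ ω, ((t : ℝ) - Ts ω) ∂P ≤ C₂ * Real.log t) :
    P {ω | Tj ω ≥ Ts ω} ≤ ENNReal.ofReal (2 * (C₁ + C₂) * Real.log t / t) := by
  set X : Ω → ℝ := fun ω => Tj ω + ((t : ℝ) - Ts ω) with hX
  have htpos : (0 : ℝ) < t := by positivity
  have hXint : Integrable X P := hTjint.add ((integrable_const _).sub hTsint)
  have hXnn : 0 ≤ᵐ[P] X := by
    filter_upwards [hTjnn, hTsle] with ω h1 h2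
    have : (0:ℝ) ≤ (t:ℝ) - Ts ω := by linarith
    simpa [hX] using add_nonneg h1 this
  have hEX : ∫ ω, X ω ∂P ≤ (C₁ + C₂) * Real.log t := by
    have h := integral_add hTjint
      (show Integrable (fun ω => (t:ℝ) - Ts ω) P from (integrable_const _).sub hTsint)
    calc ∫ ω, X ω ∂P = ∫ ω, Tj ω ∂P + ∫ ω, ((t:ℝ) - Ts ω) ∂P := h
    _ ≤ (C₁ + C₂) * Real.log t := by nlinarith [hETj, hETs]
  have hsub : {ω | Tj ω ≥ Ts ω} ⊆ {ω | (t:ℝ) ≤ X ω} := by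
    intro ω hω
    simp only [Set.mem_setOf_eq, hX] at *
    linarith
  have hmarkov := mul_meas_ge_le_integral_of_nonneg hXnn hXint (t : ℝ)
  have hfin : P {ω | (t:ℝ) ≤ X ω} ≠ ⊤ := measure_ne_top _ _
  have hlog : 0 ≤ Real.log t := Real.log_nonneg (by exact_mod_cast Nat.one_le_of_lt ht)
  have hkey : (P {ω | (t:ℝ) ≤ X ω}).toReal ≤ (C₁ + C₂) * Real.log t / t := by
    rw [le_div_iff₀ htpos]
    calc (P {ω | (t:ℝ) ≤ X ω}).toReal * t = (t:ℝ) * (P {ω | (t:ℝ) ≤ X ω}).toReal := by ring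
    _ ≤ ∫ ω, X ω ∂P := hmarkov
    _ ≤ (C₁ + C₂) * Real.log t := hEX
  calc P {ω | Tj ω ≥ Ts ω} ≤ P {ω | (t:ℝ) ≤ X ω} := measure_mono hsub
  _ = ENNReal.ofReal ((P {ω | (t:ℝ) ≤ X ω}).toReal) := (ENNReal.ofReal_toReal hfin).symm
  _ ≤ ENNReal.ofReal (2 * (C₁ + C₂) * Real.log t / t) := by
      apply ENNReal.ofReal_le_ofReal
      refine hkey.trans ?_
      gcongr
      nlinarith
end

section
/- Let Ω be a finite set with |Ω| = N, let 1 ≤ K < N, and let N_K ⊆ Ω with |N_K| = K. For each time step s = 1, …, t let a(s) be a random K-element subset of Ω, and set T_j(t) = #{ s ≤ t : j ∈ a(s) } for each j ∈ Ω. Fix t ≥ 2 and C ≥ 0, and assume E[T_j(t)] ≤ C·log t for every j ∉ N_K. Then P( ∃ j ∉ N_K, ∃ i ∈ N_K, T_j(t) ≥ T_i(t) ) ≤ 2·C·K·(N−K)·(N−K+1)·log t / t. In particular, the probability that the K options with the highest empirical choice counts T_j(t) are not exactly the set N_K is at most 2·C·K·(N−K)·(N−K+1)·log t / t. -/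
open MeasureTheory

/-- The number of time steps `s < t` at which option `j` belongs to the chosen set `a s`. -/
def choiceCount {W Opt : Type*} [DecidableEq Opt] (a : ℕ → W → Finset Opt)
    (t : ℕ) (j : Opt) (ω : W) : ℕ :=
  ((Finset.range t).filter (fun s => j ∈ a s ω)).card

lemma choiceCount_le {W Opt : Type*} [DecidableEq Opt] (a : ℕ → W → Finset Opt)
    (t : ℕ) (j : Opt) (ω : W) : choiceCount a t j ω ≤ t :=
  (Finset.card_filter_le _ _).trans_eq (Finset.card_range t)

lemma choiceCount_meas {W Opt : Type*} [MeasurableSpace W] [DecidableEq Opt]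
    (a : ℕ → W → Finset Opt) (hameas : ∀ s j, MeasurableSet {ω | j ∈ a s ω})
    (t : ℕ) (j : Opt) : Measurable fun ω => (choiceCount a t j ω : ℝ) := by
  have h : (fun ω => (choiceCount a t j ω : ℝ)) =
      fun ω => ∑ s ∈ Finset.range t, if j ∈ a s ω then (1 : ℝ) else 0 := by
    funext ω
    rw [choiceCount, Finset.card_filter]
    push_cast
    rfl
  rw [h]
  exact Finset.measurable_sum _ fun s _ =>
    Measurable.ite (hameas s j) measurable_const measurable_const

lemma choiceCount_sum {W Opt : Type*} [Fintype Opt] [DecidableEq Opt]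
    (a : ℕ → W → Finset Opt) (K : ℕ) (hacard : ∀ s ω, (a s ω).card = K)
    (t : ℕ) (ω : W) : ∑ j : Opt, choiceCount a t j ω = t * K := by
  simp only [choiceCount, Finset.card_filter]
  rw [Finset.sum_comm]
  have h : ∀ s, (∑ j : Opt, if j ∈ a s ω then 1 else 0) = K := by
    intro s
    rw [Finset.sum_ite_mem]
    simp [Finset.univ_inter, hacard s ω]
  simp [h, Finset.sum_const, Finset.card_range]

/-- with `N` options, a preferred `K`-subset `N_K`, and random `K`-subsets
`a s` chosen at each step, if `E[T_j(t)] ≤ C log t` for every non-preferred option `j`,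
then the probability that some non-preferred option has been chosen at least as often as
some preferred option is at most `2·C·K·(N−K)·(N−K+1)·log t / t`; in particular the
probability that a top-`K` set of empirical counts differs from `N_K` obeys the same bound. -/
theorem stmt_11
    {W : Type*} [MeasurableSpace W] (P : Measure W) [IsProbabilityMeasure P]
    {Opt : Type*} [Fintype Opt] [DecidableEq Opt]
    (N K : ℕ) (hN : Fintype.card Opt = N) (hK : 1 ≤ K) (hKN : K < N)
    (NK : Finset Opt) (hNK : NK.card = K)
    (a : ℕ → W → Finset Opt)
    (hacard : ∀ s ω, (a s ω).card = K)
    (hameas : ∀ s j, MeasurableSet {ω | j ∈ a s ω})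
    (t : ℕ) (ht : 2 ≤ t) (C : ℝ) (hC : 0 ≤ C)
    (hE : ∀ j ∉ NK, ∫ ω, (choiceCount a t j ω : ℝ) ∂P ≤ C * Real.log t) :
    P {ω | ∃ j ∉ NK, ∃ i ∈ NK, choiceCount a t i ω ≤ choiceCount a t j ω}
        ≤ ENNReal.ofReal
            (2 * C * K * ((N : ℝ) - K) * ((N : ℝ) - K + 1) * Real.log t / t) ∧
      P {ω | ∃ S : Finset Opt, S.card = K ∧
              (∀ i ∈ S, ∀ j ∉ S, choiceCount a t j ω ≤ choiceCount a t i ω) ∧ S ≠ NK}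
        ≤ ENNReal.ofReal
            (2 * C * K * ((N : ℝ) - K) * ((N : ℝ) - K + 1) * Real.log t / t) := by
  classical
  set f : W → ℝ := fun ω => ∑ j ∈ NKᶜ, (choiceCount a t j ω : ℝ) with hf
  have hfmeas : Measurable f :=
    Finset.measurable_sum _ fun j _ => choiceCount_meas a hameas t j
  have hfnonneg : ∀ ω, 0 ≤ f ω := fun ω =>
    Finset.sum_nonneg fun j _ => by positivity
  -- integrability of each count and of f
  have hint : ∀ j : Opt, Integrable (fun ω => (choiceCount a t j ω : ℝ)) P := by
    intro j
    refine Integrable.mono' (integrable_const (t : ℝ))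
      (choiceCount_meas a hameas t j).aestronglyMeasurable ?_
    filter_upwards with ω
    rw [Real.norm_eq_abs, abs_of_nonneg (by positivity)]
    exact_mod_cast choiceCount_le a t j ω
  have hfint : Integrable f P := integrable_finset_sum _ fun j _ => hint j
  have htpos : (0 : ℝ) < t := by positivity
  have hlog : (0 : ℝ) ≤ Real.log t := Real.log_nonneg (by exact_mod_cast ht.trans' (by norm_num))
  -- the event is included in {ω | t/2 ≤ f ω}
  have hincl : {ω | ∃ j ∉ NK, ∃ i ∈ NK, choiceCount a t i ω ≤ choiceCount a t j ω}
      ⊆ {ω | (t : ℝ) / 2 ≤ f ω} := by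
    intro ω hω
    obtain ⟨j, hj, i, hi, hij⟩ := hω
    set S := ∑ j ∈ NKᶜ, choiceCount a t j ω with hS
    have htotal : ∑ k ∈ NK, choiceCount a t k ω + S = t * K := by
      rw [hS, Finset.sum_add_sum_compl]
      exact choiceCount_sum a K hacard t ω
    have hjS : choiceCount a t j ω ≤ S :=
      Finset.single_le_sum (f := fun j => choiceCount a t j ω)
        (fun k _ => Nat.zero_le _) (Finset.mem_compl.2 hj)
    have hNKsum : ∑ k ∈ NK, choiceCount a t k ω ≤ choiceCount a t i ω + (K - 1) * t := by
      rw [← Finset.sum_erase_add NK _ hi, add_comm]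
      gcongr
      calc ∑ k ∈ NK.erase i, choiceCount a t k ω ≤ ∑ _k ∈ NK.erase i, t :=
            Finset.sum_le_sum fun k _ => choiceCount_le a t k ω
        _ = (K - 1) * t := by rw [Finset.sum_const, Finset.card_erase_of_mem hi, hNK, smul_eq_mul]
    have hiS : choiceCount a t i ω ≤ S := hij.trans hjS
    have ht2 : t ≤ 2 * S := by
      have h1 : t * K ≤ S + (K - 1) * t + S := by
        calc t * K = ∑ k ∈ NK, choiceCount a t k ω + S := htotal.symm
          _ ≤ choiceCount a t i ω + (K - 1) * t + S := by gcongr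
          _ ≤ S + (K - 1) * t + S := by gcongr
      have hKt : t * K = t + (K - 1) * t := by
        obtain ⟨k, rfl⟩ := Nat.exists_eq_add_of_le hK
        rw [Nat.add_sub_cancel_left]
        ring
      omega
    have : (t : ℝ) ≤ 2 * S := by exact_mod_cast ht2
    have hfS : f ω = (S : ℝ) := by rw [hf, hS]; push_cast; ring
    rw [Set.mem_setOf_eq, hfS]
    linarith
  -- Markov's inequality
  have hmarkov := mul_meas_ge_le_integral_of_nonneg
    (ae_of_all P hfnonneg) hfint ((t : ℝ) / 2)
  -- bound on the integral of f
  have hintf : ∫ ω, f ω ∂P ≤ ((N : ℝ) - K) * (C * Real.log t) := by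
    rw [hf, integral_finset_sum _ fun j _ => hint j]
    have hcard : (NKᶜ : Finset Opt).card = N - K := by
      rw [Finset.card_compl, hNK, hN]
    calc ∑ j ∈ NKᶜ, ∫ ω, (choiceCount a t j ω : ℝ) ∂P
        ≤ ∑ _j ∈ NKᶜ, C * Real.log t :=
          Finset.sum_le_sum fun j hj => hE j (Finset.mem_compl.1 hj)
      _ = ((N : ℝ) - K) * (C * Real.log t) := by
          rw [Finset.sum_const, hcard, nsmul_eq_mul, Nat.cast_sub hKN.le]
  -- deduce the probability bound for the set {t/2 ≤ f}
  have hkey : P {ω | (t : ℝ) / 2 ≤ f ω}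
      ≤ ENNReal.ofReal
          (2 * C * K * ((N : ℝ) - K) * ((N : ℝ) - K + 1) * Real.log t / t) := by
    have hfin : P {ω | (t : ℝ) / 2 ≤ f ω} ≠ ⊤ := measure_ne_top P _
    rw [← ENNReal.ofReal_toReal hfin]
    apply ENNReal.ofReal_le_ofReal
    have h2 : (P {ω | (t : ℝ) / 2 ≤ f ω}).toReal ≤ (∫ ω, f ω ∂P) / ((t : ℝ) / 2) := by
      rw [le_div_iff₀ (by positivity)]
      change _ * (P _).toReal ≤ _ at hmarkov
      linarith [hmarkov]
    have hM : (1 : ℝ) ≤ (N : ℝ) - K := by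
      have : (K : ℝ) + 1 ≤ (N : ℝ) := by exact_mod_cast hKN
      linarith
    have hK1 : (1 : ℝ) ≤ (K : ℝ) := by exact_mod_cast hK
    calc (P {ω | (t : ℝ) / 2 ≤ f ω}).toReal
        ≤ (∫ ω, f ω ∂P) / ((t : ℝ) / 2) := h2
      _ ≤ (((N : ℝ) - K) * (C * Real.log t)) / ((t : ℝ) / 2) := by
          apply div_le_div_of_nonneg_right hintf (by positivity)
      _ = 2 * (((N : ℝ) - K) * (C * Real.log t)) / t := by
          field_simp
      _ ≤ 2 * C * K * ((N : ℝ) - K) * ((N : ℝ) - K + 1) * Real.log t / t := by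
          gcongr ?_ / t
          have hfac : (0:ℝ) ≤ (K : ℝ) * (((N:ℝ) - K) + 1) - 1 := by nlinarith
          have key : 0 ≤ C * Real.log t * (((N:ℝ) - K) * ((K : ℝ) * (((N:ℝ) - K) + 1) - 1)) :=
            mul_nonneg (mul_nonneg hC hlog) (mul_nonneg (by linarith) hfac)
          nlinarith [key]
  constructor
  · exact (measure_mono hincl).trans hkey
  · refine le_trans (measure_mono ?_) ((measure_mono hincl).trans hkey)
    intro ω hω
    obtain ⟨S, hScard, htop, hSne⟩ := hω
    have hjex : ∃ j ∈ S, j ∉ NK := by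
      by_contra h
      push_neg at h
      exact hSne (Finset.eq_of_subset_of_card_le h (by rw [hScard, hNK]))
    have hiex : ∃ i ∈ NK, i ∉ S := by
      by_contra h
      push_neg at h
      exact hSne (Finset.eq_of_subset_of_card_le h (by rw [hScard, hNK]) ).symm
    obtain ⟨j, hjS, hjNK⟩ := hjex
    obtain ⟨i, hiNK, hiS⟩ := hiex
    exact ⟨j, hjNK, i, hiNK, htop j hjS i hiS⟩
end
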